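/- Faces of non-degenerate simplices in a non-singular simplicial set are non-degenerate: if X is a non-singular simplicial set and x ∈ X_n is non-degenerate, then ∂_i x is non-degenerate for every i ∈ {0,…,n}. Consequently, the non-degenerate simplices of X form a semisimplicial set X^{nd}. -/

import Mathlib

open CategoryTheory Simplicial

/-- A simplex `x ∈ X_n` is non-degenerate: it is not in the image of `X(g)` for any
map `g : [n] → [k]` with `k < n` (equivalently, it is not a degeneracy). -/
def SSet.Nondeg (X : SSet) {n : ℕ} (x : X _⦋n⦌) : Prop :=
  ∀ (k : ℕ), k < n → ∀ (g : (⦋n⦌ : SimplexCategory) ⟶ ⦋k⦌) (y : X _⦋k⦌),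
    X.map g.op y ≠ x

/-- A simplicial set is non-singular if the characteristic map `Δⁿ → X` of every
non-degenerate `n`-simplex is injective in every degree. -/
def SSet.NonSingular (X : SSet) : Prop :=
  ∀ (n : ℕ) (x : X _⦋n⦌), SSet.Nondeg X x →
    ∀ (k : ℕ) (g₁ g₂ : (⦋k⦌ : SimplexCategory) ⟶ ⦋n⦌),
      X.map g₁.op x = X.map g₂.op x → g₁ = g₂

/-- In a non-singular simplicial set, every face of a non-degenerate simplex is
non-degenerate (hence the non-degenerate simplices form a semisimplicial set). -/
theorem face_nondeg_of_nonSingular (X : SSet) (hX : SSet.NonSingular X)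
    (n : ℕ) (x : X _⦋n + 1⦌) (hx : SSet.Nondeg X x) (i : Fin (n + 2)) :
    SSet.Nondeg X (X.map (SimplexCategory.δ i).op x) := by
  intro k hk g y hxy
  obtain ⟨m, rfl⟩ : ∃ m, n = m + 1 := ⟨n - 1, by omega⟩
  -- g is not injective since k < m + 1
  have hni : ¬ Function.Injective g.toOrderHom := by
    intro h
    have := Fintype.card_le_of_injective _ h
    simp only [SimplexCategory.len_mk, Fintype.card_fin] at this
    omega
  obtain ⟨j, g', hg⟩ := SimplexCategory.eq_σ_comp_of_not_injective g hni
  set z : X _⦋m⦌ := X.map g'.op y with hz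
  have h1 : X.map (SimplexCategory.σ j).op z = X.map (SimplexCategory.δ i).op x := by
    rw [hz, ← FunctorToTypes.map_comp_apply, ← op_comp, ← hg, hxy]
  have hz2 : z = X.map (SimplexCategory.δ j.castSucc ≫ SimplexCategory.δ i).op x := by
    have := congrArg (X.map (SimplexCategory.δ j.castSucc).op) h1
    rwa [← FunctorToTypes.map_comp_apply, ← op_comp, SimplexCategory.δ_comp_σ_self,
      op_id, FunctorToTypes.map_id_apply, ← FunctorToTypes.map_comp_apply, ← op_comp] at this
  have h2 : X.map (SimplexCategory.δ i).op x
      = X.map (SimplexCategory.σ j ≫ SimplexCategory.δ j.castSucc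
          ≫ SimplexCategory.δ i).op x := by
    rw [← h1, hz2, ← FunctorToTypes.map_comp_apply, ← op_comp]
  have heq := hX (m + 2) x hx (m + 1) (SimplexCategory.δ i)
    (SimplexCategory.σ j ≫ SimplexCategory.δ j.castSucc ≫ SimplexCategory.δ i) h2
  -- deduce injectivity contradiction
  have happ := fun a => congrArg (fun f => f.toOrderHom a) heq
  have hcs := happ j.castSucc
  have hs := happ j.succ
  simp [SimplexCategory.comp_toOrderHom, SimplexCategory.σ, SimplexCategory.δ,
    Fin.predAbove_castSucc_self, Fin.predAbove_succ_self] at hcs hs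
  have : (j.castSucc : Fin (m + 2)) = j.succ :=
    hcs
  exact (Fin.castSucc_lt_succ (i := j)).ne this
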